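/- Let a, b and c be real numbers and n a nonnegative integer such that (b+n+1)_k ≠ 0, (b−a+1)_k ≠ 0 and (b−c+1)_k ≠ 0 for all 0 ≤ k ≤ n. Then Σ_{k=0}^{n} [(−n)_k (a)_k (b)_k (c)_k / ((b+n+1)_k (b−a+1)_k (b−c+1)_k k!)] (b+2k) = (b)_{n+1} (b−a−c+1)_n / ((b−a+1)_n (b−c+1)_n). -/
import Mathlib
noncomputable section
open Finset
variable {R : Type*} [CommRing R]

def pr (x : R) (k : ℕ) : R := (ascPochhammer R k).eval x
lemma pr_zero (x : R) : pr x 0 = 1 := by simp [pr]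
lemma pr_succ_right (x : R) (k : ℕ) : pr x (k+1) = pr x k * (x + k) :=
  ascPochhammer_succ_eval k x
lemma pr_succ_left (x : R) (k : ℕ) : pr x (k+1) = x * pr (x+1) k := by
  simp [pr, ascPochhammer_succ_left, Polynomial.eval_comp]
lemma pr_add (x : R) (m j : ℕ) : pr x (m + j) = pr x m * pr (x + m) j := by
  induction j with
  | zero => simp [pr_zero]
  | succ j ih =>
    rw [show m + (j+1) = (m+j)+1 from rfl, pr_succ_right, ih, pr_succ_right]
    push_cast; ring
lemma pr_one_nat (m : ℕ) : pr (1 : R) m = (m.factorial : R) := by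
  simp [pr]
lemma pr_neg_nat (n m : ℕ) : pr (-(n : R)) (n + 1 + m) = 0 := by
  rw [pr_add, pr_add, pr_succ_right, pr_zero]; simp

def FP (a b c : R) (n k : ℕ) : R :=
  pr (-(n:R)) k * pr a k * pr b k * pr c k * (b + 2*k) *
  pr (b+n+1+k) (n-k) * pr (b-a+1+k) (n-k) * pr (b-c+1+k) (n-k) * pr ((k:R)+1) (n-k)

def T2 (a b c : R) (n k : ℕ) : R :=
  pr (-(n:R)) k * pr a k * pr b k * pr c k * (b + 2*k) *
  pr (b+n+1+k) (n+2-k) * pr (b-a+1+k) (n+1-k) * pr (b-c+1+k) (n+1-k) * pr ((k:R)+1) (n+1-k)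

def HP (a b c : R) (n k : ℕ) : R :=
  pr (-(n:R)) k * pr a (k+1) * pr b (k+1) * pr c (k+1) *
  pr (b+n+2+k) (n+1-k) * pr (b-a+1+k) (n+1-k) * pr (b-c+1+k) (n+1-k) * pr ((k:R)+1) (n+1-k)

def GG (a b c : R) (n : ℕ) : ℕ → R
  | 0 => 0
  | (j+1) => HP a b c n j

lemma cert (a b c : R) (n k : ℕ) (hk : k ≤ n + 1) :
    (b-a+1+n)*(b-c+1+n) * FP a b c (n+1) k - (b-a-c+1+n) * T2 a b c n k
      = GG a b c n (k+1) - GG a b c n k := by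
  match k with
  | 0 =>
    show _ = HP a b c n 0 - 0
    simp only [FP, T2, HP, pr_zero, Nat.sub_zero, Nat.cast_zero, add_zero, one_mul, mul_one,
      mul_zero]
    rw [show n + 2 = (n+1)+1 from rfl]
    rw [pr_succ_left (b+(n:R)+1) (n+1)]
    rw [pr_succ_right a 0, pr_succ_right b 0, pr_succ_right c 0]
    simp only [pr_zero, Nat.cast_zero, add_zero, one_mul]
    push_cast
    ring_nf
  | (j+1) =>
    have hj : j ≤ n := by omega
    show _ = HP a b c n (j+1) - HP a b c n j
    simp only [FP, T2, HP]
    rw [show (n+1) - (j+1) = n - j from by omega,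
        show n+2 - (j+1) = (n-j)+1 from by omega,
        show n+1 - j = (n-j)+1 from by omega]
    rw [pr_succ_left (-(((n:ℕ)+1 : ℕ) : R)) j]
    rw [pr_succ_right (-(n:R)) j]
    rw [pr_succ_left (b+(n:R)+1+((j:ℕ)+1 : ℕ)) (n-j)]
    rw [pr_succ_right a (j+1), pr_succ_right b (j+1), pr_succ_right c (j+1)]
    rw [pr_succ_left (b+(n:R)+2+(j:ℕ)) (n-j)]
    rw [pr_succ_left (b-a+1+(j:R)) (n-j), pr_succ_left (b-c+1+(j:R)) (n-j)]
    rw [pr_succ_left ((j:R)+1) (n-j)]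
    push_cast
    ring_nf

set_option maxHeartbeats 1000000 in
lemma t2_eq (a b c : R) (n k : ℕ) (hk : k ≤ n) :
    T2 a b c n k = FP a b c n k *
      ((b+2*n+1)*(b+2*n+2)*(b-a+1+n)*(b-c+1+n)*(n+1)) := by
  simp only [FP, T2]
  rw [show n+2-k = (n-k)+1+1 from by omega, show n+1-k = (n-k)+1 from by omega]
  simp only [pr_succ_right]
  push_cast [Nat.cast_sub hk]
  ring_nf

lemma hp_top (a b c : R) (n : ℕ) : HP a b c n (n+1) = 0 := by
  have : pr (-(n:R)) (n+1) = 0 := by simpa using pr_neg_nat (R := R) n 0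
  simp [HP, this]

lemma t2_top (a b c : R) (n : ℕ) : T2 a b c n (n+1) = 0 := by
  have : pr (-(n:R)) (n+1) = 0 := by simpa using pr_neg_nat (R := R) n 0
  simp [T2, this]

set_option maxRecDepth 10000 in
set_option maxHeartbeats 1000000 in
theorem keyP [IsDomain R] (a b c : R)
    (hb : ∀ m : ℕ, b + (m:R) + 1 ≠ 0)
    (hba : ∀ m : ℕ, b - a + 1 + (m:R) ≠ 0)
    (hbc : ∀ m : ℕ, b - c + 1 + (m:R) ≠ 0) :
    ∀ n : ℕ, ∑ k ∈ range (n+1), FP a b c n k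
      = pr b (n+1) * pr (b-a-c+1) n * pr (b+(n:R)+1) n * (n.factorial : R) := by
  intro n
  induction n with
  | zero =>
    have h0 : FP a b c 0 0 = b := by
      simp [FP, pr_zero]
    rw [Finset.sum_range_one, h0, pr_succ_right b 0, pr_zero]
    simp [pr_zero]
  | succ n ih =>
    have E0 : ∑ k ∈ range (n+2),
        ((b-a+1+(n:R))*(b-c+1+(n:R)) * FP a b c (n+1) k - (b-a-c+1+(n:R)) * T2 a b c n k)
        = 0 := by
      rw [Finset.sum_congr rfl (fun k hk => cert a b c n k
        (Nat.lt_succ_iff.mp (Finset.mem_range.mp hk)))]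
      rw [Finset.sum_range_sub (GG a b c n)]
      show HP a b c n (n+1) - 0 = 0
      rw [hp_top]; ring
    rw [Finset.sum_sub_distrib, ← Finset.mul_sum, ← Finset.mul_sum, sub_eq_zero] at E0
    have hT2sum : ∑ k ∈ range (n+2), T2 a b c n k
        = (∑ k ∈ range (n+1), FP a b c n k) *
          ((b+2*(n:R)+1)*(b+2*(n:R)+2)*(b-a+1+(n:R))*(b-c+1+(n:R))*((n:R)+1)) := by
      rw [Finset.sum_range_succ, t2_top, add_zero,
        Finset.sum_congr rfl (fun k hk => t2_eq a b c n k
          (Nat.lt_succ_iff.mp (Finset.mem_range.mp hk))), ← Finset.sum_mul]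
    rw [hT2sum, ih] at E0
    have hBig : (b + (n:R) + 1) * ((b - a + 1 + (n:R)) * (b - c + 1 + (n:R))) ≠ 0 :=
      mul_ne_zero (hb n) (mul_ne_zero (hba n) (hbc n))
    apply mul_left_cancel₀ hBig
    have hW : (b + (n:R) + 1) * pr (b + ((n:ℕ)+1 : ℕ) + 1) (n+1)
        = pr (b + (n:R) + 1) n * (b + (n:R) + 1 + (n:R)) * (b + (n:R) + 1 + ((n:ℕ)+1 : ℕ)) := by
      rw [show b + (((n:ℕ)+1 : ℕ) : R) + 1 = (b + (n:R) + 1) + 1 by push_cast; ring,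
        ← pr_succ_left (b + (n:R) + 1) (n+1), pr_succ_right, pr_succ_right]
    rw [show (n+1+1) = (n+1)+1 from rfl, pr_succ_right b (n+1),
      pr_succ_right (b-a-c+1) n, Nat.factorial_succ]
    push_cast at E0 hW ⊢
    linear_combination (b + (n:R) + 1) * E0
      - ((b + (n:R) + 1) * (b-a+1+(n:R))*(b-c+1+(n:R)) * pr b (n+1) * pr (b-a-c+1) n
          * (b-a-c+1+(n:R)) * (((n:R)+1) * (n.factorial : R))) * hW

lemma pr_map {S : Type*} [CommRing S] (f : R →+* S) (x : R) (k : ℕ) :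
    f (pr x k) = pr (f x) k := by
  simp only [pr]
  rw [← Polynomial.eval₂_at_apply, ← Polynomial.eval_map, ascPochhammer_map]

theorem keyR (a b c : ℝ) (n : ℕ) :
    ∑ k ∈ Finset.range (n+1), FP a b c n k
      = pr b (n+1) * pr (b-a-c+1) n * pr (b+(n:ℝ)+1) n * (n.factorial : ℝ) := by
  classical
  set A : MvPolynomial (Fin 3) ℚ := MvPolynomial.X 0
  set B : MvPolynomial (Fin 3) ℚ := MvPolynomial.X 1
  set C : MvPolynomial (Fin 3) ℚ := MvPolynomial.X 2
  have hb : ∀ m : ℕ, B + (m : MvPolynomial (Fin 3) ℚ) + 1 ≠ 0 := by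
    intro m h
    have := congrArg (MvPolynomial.eval (fun _ => (0:ℚ))) h
    simp [B] at this
    exact (by positivity : ((m:ℚ) + 1) ≠ 0) this
  have hba : ∀ m : ℕ, B - A + 1 + (m : MvPolynomial (Fin 3) ℚ) ≠ 0 := by
    intro m h
    have := congrArg (MvPolynomial.eval (fun i => if i = 0 then ((m:ℚ)+2) else 0)) h
    simp [A, B] at this
    linarith [this]
  have hbc : ∀ m : ℕ, B - C + 1 + (m : MvPolynomial (Fin 3) ℚ) ≠ 0 := by
    intro m h
    have := congrArg (MvPolynomial.eval (fun i => if i = 2 then ((m:ℚ)+2) else 0)) h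
    simp [B, C] at this
    linarith [this]
  have key := keyP A B C hb hba hbc n
  let φ : MvPolynomial (Fin 3) ℚ →+* ℝ := (MvPolynomial.aeval ![a,b,c]).toRingHom
  have := congrArg φ key
  simp only [map_sum, map_mul, map_add, map_sub, map_one, map_natCast, pr_map, FP,
    map_neg, map_ofNat] at this ⊢
  have hA : φ A = a := by simp [φ, A]
  have hB : φ B = b := by simp [φ, B]
  have hC : φ C = c := by simp [φ, C]
  rw [hA, hB, hC] at this
  convert this using 2 with k hk

end

/-- The Pochhammer symbol (rising factorial) `(a)_k = a (a+1) ⋯ (a+k-1)`. -/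
noncomputable def poch (a : ℝ) (k : ℕ) : ℝ := (ascPochhammer ℝ k).eval a

theorem well_poised_sum (a b c : ℝ) (n : ℕ)
    (h1 : ∀ k ≤ n, poch (b + n + 1) k ≠ 0)
    (h2 : ∀ k ≤ n, poch (b - a + 1) k ≠ 0)
    (h3 : ∀ k ≤ n, poch (b - c + 1) k ≠ 0) :
    ∑ k ∈ Finset.range (n + 1),
      poch (-(n : ℝ)) k * poch a k * poch b k * poch c k /
        (poch (b + n + 1) k * poch (b - a + 1) k * poch (b - c + 1) k * Nat.factorial k) *
        (b + 2 * k)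
    = poch b (n + 1) * poch (b - a - c + 1) n / (poch (b - a + 1) n * poch (b - c + 1) n) := by
  have hpoch : ∀ (x : ℝ) (k : ℕ), poch x k = pr x k := fun _ _ => rfl
  simp only [hpoch]
  have hD : pr (b+(n:ℝ)+1) n * pr (b-a+1) n * pr (b-c+1) n * (n.factorial : ℝ) ≠ 0 := by
    have := h1 n le_rfl; have := h2 n le_rfl; have := h3 n le_rfl
    simp only [hpoch] at *
    exact mul_ne_zero (mul_ne_zero (mul_ne_zero ‹_› ‹_›) ‹_›)
      (Nat.cast_ne_zero.mpr n.factorial_ne_zero)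
  apply mul_right_cancel₀ hD
  rw [Finset.sum_mul]
  have hterm : ∀ k ∈ Finset.range (n+1),
      pr (-(n : ℝ)) k * pr a k * pr b k * pr c k /
        (pr (b + n + 1) k * pr (b - a + 1) k * pr (b - c + 1) k * Nat.factorial k) *
        (b + 2 * k) *
        (pr (b+(n:ℝ)+1) n * pr (b-a+1) n * pr (b-c+1) n * (n.factorial : ℝ))
      = FP a b c n k := by
    intro k hk
    have hkn : k ≤ n := Nat.lt_succ_iff.mp (Finset.mem_range.mp hk)
    have hBk : pr (b + (n:ℝ) + 1) k * pr (b - a + 1) k * pr (b - c + 1) k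
        * (Nat.factorial k : ℝ) ≠ 0 := by
      have := h1 k hkn; have := h2 k hkn; have := h3 k hkn
      simp only [hpoch] at *
      exact mul_ne_zero (mul_ne_zero (mul_ne_zero ‹_› ‹_›) ‹_›)
        (Nat.cast_ne_zero.mpr k.factorial_ne_zero)
    have h1s : pr (b+(n:ℝ)+1) n = pr (b+(n:ℝ)+1) k * pr (b+(n:ℝ)+1+(k:ℝ)) (n-k) := by
      have := pr_add (b+(n:ℝ)+1) k (n-k)
      rwa [show k+(n-k) = n from by omega] at this
    have h2s : pr (b-a+1) n = pr (b-a+1) k * pr (b-a+1+(k:ℝ)) (n-k) := by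
      have := pr_add (b-a+1 : ℝ) k (n-k)
      rwa [show k+(n-k) = n from by omega] at this
    have h3s : pr (b-c+1) n = pr (b-c+1) k * pr (b-c+1+(k:ℝ)) (n-k) := by
      have := pr_add (b-c+1 : ℝ) k (n-k)
      rwa [show k+(n-k) = n from by omega] at this
    have hfs : (n.factorial : ℝ) = (k.factorial : ℝ) * pr (1+(k:ℝ)) (n-k) := by
      have := pr_add (1:ℝ) k (n-k)
      rwa [show k+(n-k) = n from by omega, pr_one_nat, pr_one_nat] at this
    rw [div_mul_eq_mul_div, div_mul_eq_mul_div, div_eq_iff hBk]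
    simp only [FP]
    rw [h1s, h2s, h3s, hfs]
    ring_nf
  rw [Finset.sum_congr rfl hterm, keyR]
  rw [div_mul_eq_mul_div, eq_div_iff (by
    have := h2 n le_rfl; have := h3 n le_rfl
    simp only [hpoch] at *
    exact mul_ne_zero ‹_› ‹_›)]
  ring
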